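/- Let u be analytic on D and φ an analytic self-map of D, 1 ≤ p < ∞, α > -1. The conditions sup_{z∈D}(1-|z|^2)|u'(z)|/(1-|φ(z)|^2)^{(2+α)/p} < ∞ and sup_{z∈D}(1-|z|^2)|u(z)φ'(z)|/(1-|φ(z)|^2)^{(2+α+p)/p} < ∞ hold if and only if sup_{j≥1} j^{(2+α)/p}||I_u(φ^j)||_B < ∞ and sup_{j≥1} j^{(2+α)/p}||J_u(φ^{j-1})||_B < ∞, where I_u g(z) = ∫₀^z g'(ξ)u(ξ)dξ and J_u g(z) = ∫₀^z g(ξ)u'(ξ)dξ. -/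

import Mathlib

open MeasureTheory Set Filter Topology Metric

noncomputable section

/-- The open unit disk in ℂ. -/
def UD : Set ℂ := Metric.ball 0 1


/-- `s^β e^{-s}` is bounded for `s ≥ 0`. -/
lemma rpow_mul_exp_neg_le {β : ℝ} (hβ : 0 < β) {s : ℝ} (hs : 0 ≤ s) :
    s ^ β * Real.exp (-s) ≤ (Nat.factorial (Nat.ceil β) : ℝ) + 1 := by
  set m := Nat.ceil β with hm
  set c : ℝ := (Nat.factorial m : ℝ) with hc
  have h1 : s ^ β ≤ 1 + s ^ m := by
    rcases le_or_gt s 1 with h | h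
    · have : s ^ β ≤ 1 := Real.rpow_le_one hs h hβ.le
      have : (0:ℝ) ≤ s ^ m := pow_nonneg hs m
      linarith [Real.rpow_le_one hs (by linarith) hβ.le]
    · have h2 : s ^ β ≤ s ^ (m : ℝ) :=
        Real.rpow_le_rpow_of_exponent_le h.le (Nat.le_ceil β)
      rw [Real.rpow_natCast] at h2
      have : (0:ℝ) ≤ s ^ m := pow_nonneg hs m
      linarith
  have h2 : s ^ m ≤ c * Real.exp s := by
    have := Real.sum_le_exp_of_nonneg hs (m + 1)
    have hterm : s ^ m / c ≤ ∑ i ∈ Finset.range (m+1), s ^ i / (Nat.factorial i : ℝ) := by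
      refine Finset.single_le_sum (f := fun i => s ^ i / (Nat.factorial i : ℝ)) ?_ (Finset.self_mem_range_succ m)
      intro i _
      positivity
    have hfac : (0:ℝ) < c := by rw [hc]; positivity
    calc s ^ m = s ^ m / c * c := by field_simp
    _ ≤ Real.exp s * c := by
        apply mul_le_mul_of_nonneg_right (le_trans hterm this) hfac.le
    _ = c * Real.exp s := by ring
  have hexp : Real.exp (-s) ≤ 1 := Real.exp_le_one_iff.mpr (by linarith)
  have hexp0 : 0 < Real.exp (-s) := Real.exp_pos _
  have h3 : s ^ m * Real.exp (-s) ≤ c := by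
    calc s ^ m * Real.exp (-s) ≤ (c * Real.exp s) * Real.exp (-s) :=
          mul_le_mul_of_nonneg_right h2 hexp0.le
    _ = c * (Real.exp s * Real.exp (-s)) := by ring
    _ = c := by rw [← Real.exp_add]; simp
  calc s ^ β * Real.exp (-s) ≤ (1 + s ^ m) * Real.exp (-s) :=
        mul_le_mul_of_nonneg_right h1 hexp0.le
  _ = Real.exp (-s) + s ^ m * Real.exp (-s) := by ring
  _ ≤ 1 + c := by linarith
  _ = c + 1 := by ring

/-- Uniform bound `n^β r^{n-1} (1-r²)^β ≤ C`. -/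
lemma lemA {β : ℝ} (hβ : 0 < β) : ∃ C : ℝ, 0 ≤ C ∧ ∀ n : ℕ, 1 ≤ n → ∀ r : ℝ, 0 ≤ r → r < 1 →
    (n : ℝ) ^ β * (r ^ (n - 1) * (1 - r ^ 2) ^ β) ≤ C := by
  set D : ℝ := (Nat.factorial (Nat.ceil β) : ℝ) + 1 with hD
  have hD0 : (0:ℝ) < D := by positivity
  refine ⟨2 ^ β * (2 ^ β * D), by positivity, ?_⟩
  intro n hn r hr0 hr1
  set t : ℝ := 1 - r with ht
  have ht0 : 0 < t := by simp [ht]; linarith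
  have ht1 : t ≤ 1 := by simp [ht]; linarith
  have hstep1 : (1 - r ^ 2) ^ β ≤ 2 ^ β * t ^ β := by
    have h12 : 1 - r ^ 2 = (1 + r) * t := by rw [ht]; ring
    have h2t : (1 + r) * t ≤ 2 * t := by nlinarith
    calc (1 - r ^ 2) ^ β ≤ (2 * t) ^ β := by
          rw [h12]; exact Real.rpow_le_rpow (by nlinarith) h2t hβ.le
    _ = 2 ^ β * t ^ β := Real.mul_rpow (by norm_num) ht0.le
  have hstep2 : (n : ℝ) ^ β * (r ^ (n - 1) * t ^ β) ≤ 2 ^ β * D := by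
    have h2β : (1:ℝ) ≤ 2 ^ β := Real.one_le_rpow one_le_two hβ.le
    rcases Nat.lt_or_ge n 2 with h2 | h2
    · interval_cases n
      simp only [Nat.cast_one, Real.one_rpow, one_mul, Nat.sub_self, pow_zero]
      have : t ^ β ≤ 1 := Real.rpow_le_one ht0.le ht1 hβ.le
      nlinarith
    · set k : ℕ := n - 1 with hk
      have hk1 : 1 ≤ k := by omega
      have hnk : (n : ℝ) ≤ 2 * k := by
        have : (n : ℝ) = (k : ℝ) + 1 := by
          rw [hk]; push_cast [Nat.cast_sub (by omega : 1 ≤ n)]; ring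
        have : (1:ℝ) ≤ (k:ℝ) := by exact_mod_cast hk1
        linarith [this]
      have hk0 : (0:ℝ) < (k:ℝ) := by exact_mod_cast hk1
      have hnβ : (n : ℝ) ^ β ≤ 2 ^ β * (k:ℝ) ^ β := by
        calc (n : ℝ) ^ β ≤ (2 * k) ^ β :=
              Real.rpow_le_rpow (Nat.cast_nonneg n) hnk hβ.le
        _ = 2 ^ β * (k:ℝ) ^ β := Real.mul_rpow (by norm_num) hk0.le
      have hrk : r ^ k ≤ Real.exp (-((k:ℝ) * t)) := by
        have hb : r ≤ Real.exp (-t) := by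
          have := Real.add_one_le_exp (-t)
          simp [ht] at this ⊢; linarith
        calc r ^ k ≤ Real.exp (-t) ^ k := pow_le_pow_left₀ hr0 hb k
        _ = Real.exp ((k:ℝ) * (-t)) := (Real.exp_nat_mul _ k).symm
        _ = Real.exp (-((k:ℝ) * t)) := by ring_nf
      have hs : (0:ℝ) ≤ (k:ℝ) * t := by positivity
      have hkey : ((k:ℝ) * t) ^ β * Real.exp (-((k:ℝ)*t)) ≤ D := rpow_mul_exp_neg_le hβ hs
      have hkt : (k:ℝ) ^ β * t ^ β = ((k:ℝ)*t) ^ β := (Real.mul_rpow hk0.le ht0.le).symm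
      have hrknn : (0:ℝ) ≤ r ^ k := pow_nonneg hr0 k
      have htβ : (0:ℝ) ≤ t ^ β := Real.rpow_nonneg ht0.le β
      have hnβ0 : (0:ℝ) ≤ (n:ℝ) ^ β := Real.rpow_nonneg (Nat.cast_nonneg n) β
      calc (n : ℝ) ^ β * (r ^ (n-1) * t ^ β)
          ≤ (2 ^ β * (k:ℝ) ^ β) * (r ^ k * t ^ β) := by
            rw [← hk]
            apply mul_le_mul_of_nonneg_right hnβ (by positivity)
      _ ≤ (2 ^ β * (k:ℝ) ^ β) * (Real.exp (-((k:ℝ)*t)) * t ^ β) := by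
            apply mul_le_mul_of_nonneg_left (mul_le_mul_of_nonneg_right hrk htβ) (by positivity)
      _ = 2 ^ β * (((k:ℝ) ^ β * t ^ β) * Real.exp (-((k:ℝ)*t))) := by ring
      _ = 2 ^ β * (((k:ℝ)*t) ^ β * Real.exp (-((k:ℝ)*t))) := by rw [hkt]
      _ ≤ 2 ^ β * D := by
            apply mul_le_mul_of_nonneg_left hkey (by positivity)
  have hr2 : (0:ℝ) ≤ r ^ (n-1) := pow_nonneg hr0 _
  have hnβ0 : (0:ℝ) ≤ (n:ℝ) ^ β := Real.rpow_nonneg (Nat.cast_nonneg n) β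
  calc (n : ℝ) ^ β * (r ^ (n - 1) * (1 - r ^ 2) ^ β)
      ≤ (n : ℝ) ^ β * (r ^ (n - 1) * (2 ^ β * t ^ β)) := by
        apply mul_le_mul_of_nonneg_left (mul_le_mul_of_nonneg_left hstep1 hr2) hnβ0
  _ = 2 ^ β * ((n : ℝ) ^ β * (r ^ (n-1) * t ^ β)) := by ring
  _ ≤ 2 ^ β * (2 ^ β * D) := by
        apply mul_le_mul_of_nonneg_left hstep2 (by positivity)


/-- Backward estimate: if `n^β r^{n-1} A ≤ M` for all `n ≥ 1` then `A ≲ M (1-r²)^β`. -/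
lemma lemB {β : ℝ} (hβ : 0 < β) : ∃ C : ℝ, 0 ≤ C ∧ ∀ (A r M : ℝ), 0 ≤ A → 0 ≤ r → r < 1 →
    (∀ n : ℕ, 1 ≤ n → (n : ℝ) ^ β * (r ^ (n - 1) * A) ≤ M) → A ≤ C * M * (1 - r ^ 2) ^ β := by
  refine ⟨2 * 16 ^ β, by positivity, ?_⟩
  intro A r M hA hr0 hr1 h
  have h1 := h 1 le_rfl
  simp only [Nat.cast_one, Real.one_rpow, one_mul, Nat.sub_self, pow_zero] at h1
  have hM : 0 ≤ M := le_trans hA h1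
  have h16 : (1:ℝ) ≤ 16 ^ β := Real.one_le_rpow (by norm_num) hβ.le
  have hd2 : 0 < 1 - r ^ 2 := by nlinarith
  rcases le_or_gt r (3/4) with hcase | hcase
  · -- r ≤ 3/4 : use n = 1
    have h716 : (7/16 : ℝ) ≤ 1 - r ^ 2 := by nlinarith
    have hpow : (16:ℝ) ^ (-β) ≤ (1 - r ^ 2) ^ β := by
      have h116 : ((16:ℝ)) ^ (-β) = (1/16 : ℝ) ^ β := by
        rw [one_div, Real.inv_rpow (by norm_num), Real.rpow_neg (by norm_num)]
      rw [h116]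
      exact Real.rpow_le_rpow (by norm_num) (by linarith) hβ.le
    have hmul : (16:ℝ) ^ (-β) * 16 ^ β = 1 := by
      rw [← Real.rpow_add (by norm_num)]; simp
    have hp1 : (0:ℝ) ≤ 2 * 16 ^ β * M := by positivity
    have hstep := mul_le_mul_of_nonneg_left hpow hp1
    have heq : 2 * 16 ^ β * M * 16 ^ (-β) = 2 * M := by
      linear_combination 2 * M * hmul
    linarith
  · -- r > 3/4 : use n = ⌊1/(2(1-r))⌋
    set d : ℝ := 1 - r with hd
    have hd0 : 0 < d := by simp [hd]; linarith
    have hd4 : d < 1/4 := by simp [hd]; linarith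
    set n : ℕ := ⌊1/(2*d)⌋₊ with hn
    have hx2 : (2:ℝ) ≤ 1/(2*d) := by
      rw [le_div_iff₀ (by positivity)]; linarith
    have hn1 : 1 ≤ n := by
      rw [hn]; exact Nat.le_floor (by exact_mod_cast le_trans one_le_two hx2)
    have hnle : (n:ℝ) ≤ 1/(2*d) := Nat.floor_le (by positivity)
    have hngt : 1/(4*d) ≤ (n:ℝ) := by
      have hfl : 1/(2*d) - 1 < (n:ℝ) := by
        have := Nat.lt_floor_add_one (1/(2*d))
        rw [← hn] at this; linarith
      have : 1/(4*d) ≤ 1/(2*d) - 1 := by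
        rw [div_sub' (by positivity : (2:ℝ)*d ≠ 0), div_le_div_iff₀ (by positivity) (by positivity)]
        nlinarith
      linarith
    have hnd : (n:ℝ) * d ≤ 1/2 := by
      calc (n:ℝ) * d ≤ (1/(2*d)) * d := mul_le_mul_of_nonneg_right hnle hd0.le
      _ = 1/2 := by field_simp
    -- Bernoulli: r^(n-1) ≥ 1 - (n-1) d ≥ 1/2
    have hbern : (1:ℝ)/2 ≤ r ^ (n-1) := by
      have hb := one_add_mul_le_pow (a := -d) (by linarith) (n-1)
      have hcast : ((n-1 : ℕ) : ℝ) = (n:ℝ) - 1 := by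
        push_cast [Nat.cast_sub hn1]; ring
      rw [hcast] at hb
      have hrd : (1 + (-d)) = r := by simp [hd]
      rw [hrd] at hb
      have h12 : (1:ℝ)/2 ≤ 1 + ((n:ℝ) - 1) * (-d) := by nlinarith
      exact le_trans h12 hb
    have hnβ : (1/(4*d)) ^ β ≤ (n:ℝ) ^ β :=
      Real.rpow_le_rpow (by positivity) hngt hβ.le
    have hkey := h n hn1
    have hX : (1/(4*d)) ^ β * ((1/2) * A) ≤ M := by
      calc (1/(4*d)) ^ β * ((1/2) * A) ≤ (n:ℝ) ^ β * ((1/2) * A) := by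
            apply mul_le_mul_of_nonneg_right hnβ (by positivity)
      _ ≤ (n:ℝ) ^ β * (r ^ (n-1) * A) := by
            apply mul_le_mul_of_nonneg_left
              (mul_le_mul_of_nonneg_right hbern hA)
              (Real.rpow_nonneg (Nat.cast_nonneg n) β)
      _ ≤ M := hkey
    have hinv : (1/(4*d)) ^ β = 1 / (4*d) ^ β := by
      rw [one_div, Real.inv_rpow (by positivity), one_div]
    have h4d : (0:ℝ) < (4*d) ^ β := Real.rpow_pos_of_pos (by positivity) β
    have hA4 : A ≤ 2 * (4*d) ^ β * M := by
      rw [hinv, div_mul_eq_mul_div, div_le_iff₀ h4d] at hX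
      nlinarith
    have hdb : (4*d) ^ β ≤ 4 ^ β * (1 - r^2) ^ β := by
      have h4 : (4:ℝ)*d = 4 * d := rfl
      have hdle : d ≤ 1 - r ^ 2 := by nlinarith
      calc (4*d) ^ β = 4 ^ β * d ^ β := Real.mul_rpow (by norm_num) hd0.le
      _ ≤ 4 ^ β * (1 - r^2) ^ β := by
          apply mul_le_mul_of_nonneg_left
            (Real.rpow_le_rpow hd0.le hdle hβ.le) (by positivity)
    have h416 : (4:ℝ) ^ β ≤ 16 ^ β :=
      Real.rpow_le_rpow (by norm_num) (by norm_num) hβ.le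
    calc A ≤ 2 * (4*d) ^ β * M := hA4
    _ ≤ 2 * (4 ^ β * (1 - r^2) ^ β) * M := by
        apply mul_le_mul_of_nonneg_right (by linarith) hM
    _ ≤ 2 * (16 ^ β * (1 - r^2) ^ β) * M := by
        apply mul_le_mul_of_nonneg_right _ hM
        have := Real.rpow_nonneg hd2.le β
        nlinarith
    _ = 2 * 16 ^ β * M * (1 - r ^ 2) ^ β := by ring

lemma isOpen_UD : IsOpen UD := isOpen_ball

lemma norm_lt_one_of_mem_UD {z : ℂ} (hz : z ∈ UD) : ‖z‖ < 1 := by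
  simpa [UD, dist_zero_right] using hz

lemma mem_UD_iff {z : ℂ} : z ∈ UD ↔ ‖z‖ < 1 := by
  simp [UD, dist_zero_right]

lemma derivOn {f : ℂ → ℂ} (h : DifferentiableOn ℂ f UD) :
    DifferentiableOn ℂ (deriv f) UD :=
  ((h.analyticOnNhd isOpen_UD).deriv).differentiableOn

/-- Derivative of the primitive `w ↦ ∫_[0,w] f`. -/
lemma hasDerivAt_primitive {f : ℂ → ℂ} (hf : DifferentiableOn ℂ f UD) {z : ℂ} (hz : z ∈ UD) :
    HasDerivAt (fun w => ∫ t in (0:ℝ)..1, f ((t : ℂ) * w) * w) (f z) z := by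
  have hf' : DifferentiableOn ℂ (deriv f) UD := derivOn hf
  have hr : ‖z‖ < 1 := norm_lt_one_of_mem_UD hz
  have hr0 : (0:ℝ) ≤ ‖z‖ := norm_nonneg z
  set ε : ℝ := (1 - ‖z‖)/2 with hε
  have hεpos : 0 < ε := by rw [hε]; linarith
  set ρ : ℝ := (1 + ‖z‖)/2 with hρ
  have hρ1 : ρ < 1 := by rw [hρ]; linarith
  have hρ0 : 0 < ρ := by rw [hρ]; linarith
  have hsub : closedBall (0:ℂ) ρ ⊆ UD := by
    intro w hw
    rw [mem_UD_iff]
    calc ‖w‖ ≤ ρ := by simpa [dist_zero_right] using hw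
    _ < 1 := hρ1
  -- membership facts
  have hmem : ∀ (x : ℂ), x ∈ ball z ε → ∀ t : ℝ, t ∈ Set.uIcc (0:ℝ) 1 →
      (t : ℂ) * x ∈ closedBall (0:ℂ) ρ := by
    intro x hx t ht
    rw [Set.uIcc_of_le (zero_le_one)] at ht
    have hxn : ‖x‖ ≤ ρ := by
      have := mem_ball.mp hx
      have h2 : ‖x - z‖ < ε := by rwa [dist_eq_norm] at this
      calc ‖x‖ = ‖z + (x - z)‖ := by ring_nf
      _ ≤ ‖z‖ + ‖x - z‖ := norm_add_le _ _
      _ ≤ ‖z‖ + ε := by linarith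
      _ = ρ := by rw [hε, hρ]; ring
    rw [mem_closedBall, dist_zero_right, norm_mul, Complex.norm_real]
    calc |t| * ‖x‖ ≤ 1 * ρ := by
          apply mul_le_mul _ hxn (norm_nonneg x) zero_le_one
          rw [abs_le]; constructor <;> [linarith [ht.1]; exact ht.2]
    _ = ρ := one_mul ρ
  -- bound on f and deriv f on the closed ball
  obtain ⟨K1, hK1⟩ := (isCompact_closedBall (0:ℂ) ρ).exists_bound_of_continuousOn
    (hf.continuousOn.mono hsub)
  obtain ⟨K2, hK2⟩ := (isCompact_closedBall (0:ℂ) ρ).exists_bound_of_continuousOn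
    (hf'.continuousOn.mono hsub)
  set K : ℝ := max K1 K2 + 1 with hK
  have hK0 : 0 < K := by
    have := hK1 0 (mem_closedBall_self hρ0.le)
    have h1 : K1 ≤ max K1 K2 := le_max_left _ _
    rw [hK]; nlinarith [norm_nonneg (f 0)]
  have hbf : ∀ w ∈ closedBall (0:ℂ) ρ, ‖f w‖ ≤ K := fun w hw =>
    le_trans (hK1 w hw) (by rw [hK]; nlinarith [le_max_left K1 K2])
  have hbf' : ∀ w ∈ closedBall (0:ℂ) ρ, ‖deriv f w‖ ≤ K := fun w hw =>
    le_trans (hK2 w hw) (by rw [hK]; nlinarith [le_max_right K1 K2])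
  -- continuity lemmas
  have hcont_param : ∀ (x : ℂ), ‖x‖ ≤ ρ → ContinuousOn (fun t : ℝ => f ((t:ℂ) * x) * x)
      (Set.uIcc (0:ℝ) 1) := by
    intro x hx
    apply ContinuousOn.mul _ continuousOn_const
    apply hf.continuousOn.comp
    · exact (Complex.continuous_ofReal.mul continuous_const).continuousOn
    · intro t ht
      apply hsub
      rw [Set.uIcc_of_le zero_le_one] at ht
      rw [mem_closedBall, dist_zero_right, norm_mul, Complex.norm_real]
      calc |t| * ‖x‖ ≤ 1 * ρ := by
            apply mul_le_mul _ hx (norm_nonneg x) zero_le_one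
            rw [abs_le]; exact ⟨by linarith [ht.1], ht.2⟩
      _ = ρ := one_mul ρ
  have hzρ : ‖z‖ ≤ ρ := by rw [hρ]; linarith
  -- the derivative integrand
  set F' : ℂ → ℝ → ℂ := fun x t => deriv f ((t:ℂ) * x) * (t:ℂ) * x + f ((t:ℂ) * x) with hF'
  have hcont_F' : ContinuousOn (F' z) (Set.uIcc (0:ℝ) 1) := by
    have hmapsTo : Set.MapsTo (fun t : ℝ => (t:ℂ) * z) (Set.uIcc (0:ℝ) 1) UD := by
      intro t ht
      apply hsub
      rw [Set.uIcc_of_le zero_le_one] at ht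
      rw [mem_closedBall, dist_zero_right, norm_mul, Complex.norm_real]
      calc |t| * ‖z‖ ≤ 1 * ρ := by
            apply mul_le_mul _ hzρ (norm_nonneg z) zero_le_one
            rw [abs_le]; exact ⟨by linarith [ht.1], ht.2⟩
      _ = ρ := one_mul ρ
    have c1 : ContinuousOn (fun t : ℝ => deriv f ((t:ℂ) * z)) (Set.uIcc (0:ℝ) 1) :=
      hf'.continuousOn.comp
        ((Complex.continuous_ofReal.mul continuous_const).continuousOn) hmapsTo
    have c2 : ContinuousOn (fun t : ℝ => f ((t:ℂ) * z)) (Set.uIcc (0:ℝ) 1) :=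
      hf.continuousOn.comp
        ((Complex.continuous_ofReal.mul continuous_const).continuousOn) hmapsTo
    exact ((c1.mul (Complex.continuous_ofReal.continuousOn)).mul continuousOn_const).add c2
  -- apply dominated differentiation
  have main := intervalIntegral.hasDerivAt_integral_of_dominated_loc_of_deriv_le
    (F := fun x t => f ((t:ℂ) * x) * x) (F' := F') (x₀ := z)
    (bound := fun _ => K * 1 * 1 + K) (a := 0) (b := 1) (μ := volume) (ball_mem_nhds z hεpos)
    ?_ ?_ ?_ ?_ ?_ ?_
  · -- conclude : rewrite the value of the derivative
    have hval : (∫ t in (0:ℝ)..1, F' z t) = f z := by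
      have hderiv : ∀ t ∈ Set.uIcc (0:ℝ) 1,
          HasDerivAt (fun s : ℝ => (s:ℂ) * f ((s:ℂ) * z)) (F' z t) t := by
        intro t ht
        have htz : (t:ℂ) * z ∈ UD := by
          apply hsub
          exact hmem z (mem_ball_self hεpos) t ht
        have hd : HasDerivAt f (deriv f ((t:ℂ)*z)) ((t:ℂ)*z) :=
          (hf.differentiableAt (isOpen_UD.mem_nhds htz)).hasDerivAt
        have hmul : HasDerivAt (fun w : ℂ => w * z) z (t:ℂ) := by
          simpa using (hasDerivAt_id ((t:ℂ))).mul_const z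
        have hcomp : HasDerivAt (fun w : ℂ => f (w * z)) (deriv f ((t:ℂ)*z) * z) (t:ℂ) :=
          hd.comp (t:ℂ) hmul
        have hprod := (hasDerivAt_id ((t:ℂ))).mul hcomp
        have := hprod.comp_ofReal
        convert this using 1
        · rfl
        · simp only [hF', id_eq]; push_cast; ring
      rw [intervalIntegral.integral_eq_sub_of_hasDerivAt hderiv
        (hcont_F'.intervalIntegrable)]
      push_cast; simp
    rw [hval] at main
    exact main.2
  · -- hF_meas
    filter_upwards [ball_mem_nhds z hεpos] with x hx
    have hxn : ‖x‖ ≤ ρ := by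
      have hxz := mem_ball.mp hx
      have h2 : ‖x - z‖ < ε := by rwa [dist_eq_norm] at hxz
      calc ‖x‖ = ‖z + (x - z)‖ := by ring_nf
      _ ≤ ‖z‖ + ‖x - z‖ := norm_add_le _ _
      _ ≤ ρ := by rw [hρ]; rw [hε] at h2; linarith
    exact ((hcont_param x hxn).mono (Set.uIoc_subset_uIcc)).aestronglyMeasurable
      measurableSet_uIoc
  · -- hF_int
    exact (hcont_param z hzρ).intervalIntegrable
  · -- hF'_meas
    exact (hcont_F'.mono (Set.uIoc_subset_uIcc)).aestronglyMeasurable measurableSet_uIoc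
  · -- h_bound
    apply Filter.Eventually.of_forall
    intro t ht x hx
    have htI : t ∈ Set.uIcc (0:ℝ) 1 := Set.uIoc_subset_uIcc ht
    have hmemx := hmem x hx t htI
    have ht1 : |t| ≤ 1 := by
      rw [Set.uIcc_of_le zero_le_one] at htI
      rw [abs_le]; exact ⟨by linarith [htI.1], htI.2⟩
    have hxρ : ‖x‖ ≤ ρ := by
      have hxz := mem_ball.mp hx
      have h2 : ‖x - z‖ < ε := by rwa [dist_eq_norm] at hxz
      calc ‖x‖ = ‖z + (x - z)‖ := by ring_nf
      _ ≤ ‖z‖ + ‖x - z‖ := norm_add_le _ _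
      _ ≤ ρ := by rw [hρ]; rw [hε] at h2; linarith
    have hx1 : ‖x‖ ≤ 1 := le_trans hxρ hρ1.le
    rw [hF']
    calc ‖deriv f ((t:ℂ)*x) * (t:ℂ) * x + f ((t:ℂ)*x)‖
        ≤ ‖deriv f ((t:ℂ)*x) * (t:ℂ) * x‖ + ‖f ((t:ℂ)*x)‖ := norm_add_le _ _
    _ = ‖deriv f ((t:ℂ)*x)‖ * |t| * ‖x‖ + ‖f ((t:ℂ)*x)‖ := by
        rw [norm_mul, norm_mul, Complex.norm_real, Real.norm_eq_abs]
    _ ≤ K * 1 * 1 + K := by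
        have hd := hbf' _ hmemx
        have hfv := hbf _ hmemx
        have h1 : ‖deriv f ((t:ℂ)*x)‖ * |t| * ‖x‖ ≤ K * 1 * 1 := by
          apply mul_le_mul _ hx1 (norm_nonneg x) (by positivity)
          apply mul_le_mul hd ht1 (abs_nonneg t) hK0.le
        linarith
  · -- bound_integrable
    exact intervalIntegrable_const
  · -- h_diff
    apply Filter.Eventually.of_forall
    intro t ht x hx
    have htI : t ∈ Set.uIcc (0:ℝ) 1 := Set.uIoc_subset_uIcc ht
    have htx : (t:ℂ) * x ∈ UD := hsub (hmem x hx t htI)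
    have hd : HasDerivAt f (deriv f ((t:ℂ)*x)) ((t:ℂ)*x) :=
      (hf.differentiableAt (isOpen_UD.mem_nhds htx)).hasDerivAt
    have hlin : HasDerivAt (fun y : ℂ => (t:ℂ) * y) (t:ℂ) x := by
      simpa using (hasDerivAt_id x).const_mul ((t:ℂ))
    have hcomp : HasDerivAt (fun y : ℂ => f ((t:ℂ) * y)) (deriv f ((t:ℂ)*x) * (t:ℂ)) x :=
      hd.comp x hlin
    have := hcomp.mul (hasDerivAt_id x)
    convert this using 1
    · rfl
    · rfl
    · simp only [hF', id_eq]; ring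

/-- `I_u g (z) = ∫₀^z g'(ξ) u(ξ) dξ` (integration along the segment from 0 to z). -/
def Iu (u g : ℂ → ℂ) (z : ℂ) : ℂ :=
  ∫ t in (0 : ℝ)..1, deriv g ((t : ℂ) * z) * u ((t : ℂ) * z) * z

/-- `J_u g (z) = ∫₀^z g(ξ) u'(ξ) dξ` (integration along the segment from 0 to z). -/
def Ju (u g : ℂ → ℂ) (z : ℂ) : ℂ :=
  ∫ t in (0 : ℝ)..1, g ((t : ℂ) * z) * deriv u ((t : ℂ) * z) * z

lemma hasDerivAt_Iu {u g : ℂ → ℂ} (hu : DifferentiableOn ℂ u UD)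
    (hg : DifferentiableOn ℂ g UD) {z : ℂ} (hz : z ∈ UD) :
    HasDerivAt (Iu u g) (deriv g z * u z) z :=
  hasDerivAt_primitive ((derivOn hg).mul hu) hz

lemma hasDerivAt_Ju {u g : ℂ → ℂ} (hu : DifferentiableOn ℂ u UD)
    (hg : DifferentiableOn ℂ g UD) {z : ℂ} (hz : z ∈ UD) :
    HasDerivAt (Ju u g) (g z * deriv u z) z :=
  hasDerivAt_primitive (hg.mul (derivOn hu)) hz

/-- the two sup-conditions characterizing boundedness of `uC_φ : A^p_α → B`
hold iff `sup_{j≥1} j^{(2+α)/p} ‖I_u(φ^j)‖_B < ∞` and `sup_{j≥1} j^{(2+α)/p} ‖J_u(φ^{j-1})‖_B < ∞`. -/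
theorem stmt12 (p α : ℝ) (hp : 1 ≤ p) (hα : -1 < α) (u φ : ℂ → ℂ)
    (hu : DifferentiableOn ℂ u UD) (hφ : DifferentiableOn ℂ φ UD) (hφm : MapsTo φ UD UD) :
    ((∃ M : ℝ, ∀ z ∈ UD,
        (1 - ‖z‖ ^ 2) * ‖deriv u z‖ ≤ M * (1 - ‖φ z‖ ^ 2) ^ ((2 + α) / p)) ∧
      (∃ M : ℝ, ∀ z ∈ UD,
        (1 - ‖z‖ ^ 2) * ‖u z * deriv φ z‖ ≤ M * (1 - ‖φ z‖ ^ 2) ^ ((2 + α + p) / p))) ↔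
    ((∃ M : ℝ, ∀ j : ℕ, 1 ≤ j → ∀ z ∈ UD,
        (j : ℝ) ^ ((2 + α) / p) * ((1 - ‖z‖ ^ 2) * ‖deriv (Iu u (φ ^ j)) z‖) ≤ M) ∧
      (∃ M : ℝ, ∀ j : ℕ, 1 ≤ j → ∀ z ∈ UD,
        (j : ℝ) ^ ((2 + α) / p) * ((1 - ‖z‖ ^ 2) * ‖deriv (Ju u (φ ^ (j - 1))) z‖) ≤ M)) := by
  have hp0 : 0 < p := lt_of_lt_of_le one_pos hp
  have hγ : 0 < (2 + α) / p := div_pos (by linarith) hp0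
  have hγ1 : 0 < (2 + α) / p + 1 := by linarith
  have hsum : (2 + α + p) / p = (2 + α) / p + 1 := by field_simp
  -- differentiability of powers of φ
  have hφpow : ∀ k : ℕ, DifferentiableOn ℂ (φ ^ k) UD := by
    intro k
    have : (φ ^ k : ℂ → ℂ) = fun w => φ w ^ k := rfl
    rw [this]; exact hφ.pow k
  -- derivative formulas
  have hIud : ∀ (j : ℕ), ∀ z ∈ UD, ‖deriv (Iu u (φ ^ j)) z‖ =
      (j : ℝ) * (‖φ z‖ ^ (j - 1) * ‖u z * deriv φ z‖) := by
    intro j z hz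
    have h := (hasDerivAt_Iu hu (hφpow j) hz).deriv
    have hd : HasDerivAt (fun w => φ w ^ j) ((j : ℂ) * φ z ^ (j - 1) * deriv φ z) z :=
      ((hφ.differentiableAt (isOpen_UD.mem_nhds hz)).hasDerivAt).pow j
    have hdj : deriv (φ ^ j) z = (j : ℂ) * φ z ^ (j - 1) * deriv φ z := by
      have : (φ ^ j : ℂ → ℂ) = fun w => φ w ^ j := rfl
      rw [this]; exact hd.deriv
    rw [h, hdj]
    rw [norm_mul, norm_mul, norm_mul, norm_mul, norm_pow, RCLike.norm_natCast]
    ring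
  have hJud : ∀ (k : ℕ), ∀ z ∈ UD, ‖deriv (Ju u (φ ^ k)) z‖ =
      ‖φ z‖ ^ k * ‖deriv u z‖ := by
    intro k z hz
    have h := (hasDerivAt_Ju hu (hφpow k) hz).deriv
    have hval : (φ ^ k : ℂ → ℂ) z = φ z ^ k := rfl
    rw [h, hval, norm_mul, norm_pow]
  constructor
  · rintro ⟨⟨M1, hM1⟩, ⟨M2, hM2⟩⟩
    obtain ⟨C1, hC10, hC1⟩ := lemA hγ
    obtain ⟨C2, hC20, hC2⟩ := lemA hγ1
    constructor
    · refine ⟨|M2| * C2, ?_⟩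
      intro j hj z hz
      rw [hIud j z hz]
      have hrlt : ‖φ z‖ < 1 := norm_lt_one_of_mem_UD (hφm hz)
      have hr0 : (0:ℝ) ≤ ‖φ z‖ := norm_nonneg _
      have hrp : (0:ℝ) ≤ (1 - ‖φ z‖ ^ 2) ^ ((2 + α) / p + 1) :=
        Real.rpow_nonneg (by nlinarith) _
      have hA : (1 - ‖z‖ ^ 2) * ‖u z * deriv φ z‖ ≤
          |M2| * (1 - ‖φ z‖ ^ 2) ^ ((2 + α) / p + 1) := by
        calc (1 - ‖z‖ ^ 2) * ‖u z * deriv φ z‖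
            ≤ M2 * (1 - ‖φ z‖ ^ 2) ^ ((2 + α + p) / p) := hM2 z hz
        _ = M2 * (1 - ‖φ z‖ ^ 2) ^ ((2 + α) / p + 1) := by rw [hsum]
        _ ≤ |M2| * (1 - ‖φ z‖ ^ 2) ^ ((2 + α) / p + 1) :=
            mul_le_mul_of_nonneg_right (le_abs_self M2) hrp
      have hj1 : (1:ℝ) ≤ (j:ℝ) := by exact_mod_cast hj
      have hrpow : (j:ℝ) ^ ((2 + α) / p) * (j:ℝ) = (j:ℝ) ^ ((2 + α) / p + 1) :=
        (Real.rpow_add_one (by linarith) _).symm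
      have hjβ : (0:ℝ) ≤ (j:ℝ) ^ ((2 + α) / p + 1) := Real.rpow_nonneg (by linarith) _
      calc (j:ℝ) ^ ((2 + α) / p) *
            ((1 - ‖z‖ ^ 2) * ((j:ℝ) * (‖φ z‖ ^ (j - 1) * ‖u z * deriv φ z‖)))
          = (j:ℝ) ^ ((2 + α) / p + 1) *
            (‖φ z‖ ^ (j - 1) * ((1 - ‖z‖ ^ 2) * ‖u z * deriv φ z‖)) := by
            rw [← hrpow]; ring
      _ ≤ (j:ℝ) ^ ((2 + α) / p + 1) *
            (‖φ z‖ ^ (j - 1) * (|M2| * (1 - ‖φ z‖ ^ 2) ^ ((2 + α) / p + 1))) := by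
            apply mul_le_mul_of_nonneg_left
              (mul_le_mul_of_nonneg_left hA (pow_nonneg hr0 _)) hjβ
      _ = |M2| * ((j:ℝ) ^ ((2 + α) / p + 1) *
            (‖φ z‖ ^ (j - 1) * (1 - ‖φ z‖ ^ 2) ^ ((2 + α) / p + 1))) := by ring
      _ ≤ |M2| * C2 :=
            mul_le_mul_of_nonneg_left (hC2 j hj _ hr0 hrlt) (abs_nonneg M2)
    · refine ⟨|M1| * C1, ?_⟩
      intro j hj z hz
      rw [hJud (j - 1) z hz]
      have hrlt : ‖φ z‖ < 1 := norm_lt_one_of_mem_UD (hφm hz)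
      have hr0 : (0:ℝ) ≤ ‖φ z‖ := norm_nonneg _
      have hrp : (0:ℝ) ≤ (1 - ‖φ z‖ ^ 2) ^ ((2 + α) / p) :=
        Real.rpow_nonneg (by nlinarith) _
      have hA : (1 - ‖z‖ ^ 2) * ‖deriv u z‖ ≤
          |M1| * (1 - ‖φ z‖ ^ 2) ^ ((2 + α) / p) :=
        le_trans (hM1 z hz) (mul_le_mul_of_nonneg_right (le_abs_self M1) hrp)
      have hjβ : (0:ℝ) ≤ (j:ℝ) ^ ((2 + α) / p) := Real.rpow_nonneg (Nat.cast_nonneg j) _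
      calc (j:ℝ) ^ ((2 + α) / p) * ((1 - ‖z‖ ^ 2) * (‖φ z‖ ^ (j - 1) * ‖deriv u z‖))
          = (j:ℝ) ^ ((2 + α) / p) *
            (‖φ z‖ ^ (j - 1) * ((1 - ‖z‖ ^ 2) * ‖deriv u z‖)) := by ring
      _ ≤ (j:ℝ) ^ ((2 + α) / p) *
            (‖φ z‖ ^ (j - 1) * (|M1| * (1 - ‖φ z‖ ^ 2) ^ ((2 + α) / p))) := by
            apply mul_le_mul_of_nonneg_left
              (mul_le_mul_of_nonneg_left hA (pow_nonneg hr0 _)) hjβ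
      _ = |M1| * ((j:ℝ) ^ ((2 + α) / p) *
            (‖φ z‖ ^ (j - 1) * (1 - ‖φ z‖ ^ 2) ^ ((2 + α) / p))) := by ring
      _ ≤ |M1| * C1 :=
            mul_le_mul_of_nonneg_left (hC1 j hj _ hr0 hrlt) (abs_nonneg M1)
  · rintro ⟨⟨M1, hM1⟩, ⟨M2, hM2⟩⟩
    obtain ⟨C1, hC10, hC1⟩ := lemB hγ
    obtain ⟨C2, hC20, hC2⟩ := lemB hγ1
    constructor
    · refine ⟨C1 * M2, ?_⟩
      intro z hz
      have hrlt : ‖φ z‖ < 1 := norm_lt_one_of_mem_UD (hφm hz)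
      have hr0 : (0:ℝ) ≤ ‖φ z‖ := norm_nonneg _
      have hzn : ‖z‖ < 1 := norm_lt_one_of_mem_UD hz
      have hApos : (0:ℝ) ≤ (1 - ‖z‖ ^ 2) * ‖deriv u z‖ := by
        have h1 : (0:ℝ) ≤ 1 - ‖z‖ ^ 2 := by nlinarith [norm_nonneg z]
        exact mul_nonneg h1 (norm_nonneg _)
      exact hC1 _ _ M2 hApos hr0 hrlt (by
        intro n hn
        have h := hM2 n hn z hz
        rw [hJud (n - 1) z hz] at h
        calc (n:ℝ) ^ ((2 + α) / p) * (‖φ z‖ ^ (n - 1) * ((1 - ‖z‖ ^ 2) * ‖deriv u z‖))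
            = (n:ℝ) ^ ((2 + α) / p) *
              ((1 - ‖z‖ ^ 2) * (‖φ z‖ ^ (n - 1) * ‖deriv u z‖)) := by ring
        _ ≤ M2 := h)
    · refine ⟨C2 * M1, ?_⟩
      intro z hz
      have hrlt : ‖φ z‖ < 1 := norm_lt_one_of_mem_UD (hφm hz)
      have hr0 : (0:ℝ) ≤ ‖φ z‖ := norm_nonneg _
      have hzn : ‖z‖ < 1 := norm_lt_one_of_mem_UD hz
      have hApos : (0:ℝ) ≤ (1 - ‖z‖ ^ 2) * ‖u z * deriv φ z‖ := by
        have h1 : (0:ℝ) ≤ 1 - ‖z‖ ^ 2 := by nlinarith [norm_nonneg z]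
        exact mul_nonneg h1 (norm_nonneg _)
      rw [hsum]
      exact hC2 _ _ M1 hApos hr0 hrlt (by
        intro n hn
        have h := hM1 n hn z hz
        rw [hIud n z hz] at h
        have hn1 : (1:ℝ) ≤ (n:ℝ) := by exact_mod_cast hn
        have hrpow : (n:ℝ) ^ ((2 + α) / p + 1) = (n:ℝ) ^ ((2 + α) / p) * (n:ℝ) :=
          Real.rpow_add_one (by linarith) _
        calc (n:ℝ) ^ ((2 + α) / p + 1) *
              (‖φ z‖ ^ (n - 1) * ((1 - ‖z‖ ^ 2) * ‖u z * deriv φ z‖))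
            = (n:ℝ) ^ ((2 + α) / p) *
              ((1 - ‖z‖ ^ 2) * ((n:ℝ) * (‖φ z‖ ^ (n - 1) * ‖u z * deriv φ z‖))) := by
              rw [hrpow]; ring
        _ ≤ M1 := h)
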